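/- There exist a function v : ℤ² → ℝ² and constants 0 < m ≤ M < ∞ and c > 0 such that: v is injective; m ≤ ‖v(x)‖ ≤ M for every x ∈ ℤ²; and for every pair of distinct points x, y ∈ ℤ² and every time t ∈ ℝ, ‖(x + t·v(x)) − (y + t·v(y))‖ ≥ c. -/

import Mathlib

/-- The embedding of the integer lattice `ℤ²` into the Euclidean plane. -/
noncomputable def latticeEmb (p : ℤ × ℤ) : EuclideanSpace ℝ (Fin 2) :=
  WithLp.toLp 2 ![(p.1 : ℝ), (p.2 : ℝ)]

/-- auxiliary velocity field -/
noncomputable def vAux (p : ℤ × ℤ) : EuclideanSpace ℝ (Fin 2) :=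
  WithLp.toLp 2 ![10 - Real.arctan p.2, Real.arctan p.1]

lemma arctan_key (a b : ℤ) :
    ((a : ℝ) - b) * (Real.arctan a - Real.arctan b) ≥ |Real.arctan a - Real.arctan b| := by
  rcases lt_trichotomy a b with h | h | h
  · have h1 : Real.arctan a < Real.arctan b := by
      exact Real.arctan_strictMono (by exact_mod_cast h)
    have h2 : (b : ℝ) - a ≥ 1 := by
      have : (a : ℝ) + 1 ≤ b := by exact_mod_cast h
      linarith
    rw [abs_of_nonpos (by linarith)]
    nlinarith
  · simp [h]
  · have h1 : Real.arctan b < Real.arctan a := by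
      exact Real.arctan_strictMono (by exact_mod_cast h)
    have h2 : (a : ℝ) - b ≥ 1 := by
      have : (b : ℝ) + 1 ≤ a := by exact_mod_cast h
      linarith
    rw [abs_of_nonneg (by linarith)]
    nlinarith

lemma arctan_abs_lt_two (n : ℤ) : |Real.arctan n| < 2 := by
  have h1 := Real.arctan_lt_pi_div_two (n : ℝ)
  have h2 := Real.neg_pi_div_two_lt_arctan (n : ℝ)
  have hpi : Real.pi < 4 := by
    have := Real.pi_lt_d2; linarith
  rw [abs_lt]; constructor <;> nlinarith

/-- There exist an injective velocity assignment `v : ℤ² → ℝ²` with speeds bounded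
between positive constants `m ≤ M`, and a constant `c > 0`, such that all pairwise
distances of the moving particles `x + t·v(x)` stay at least `c` for all times. -/
theorem lattice_noncolliding_velocities :
    ∃ (v : ℤ × ℤ → EuclideanSpace ℝ (Fin 2)) (m M c : ℝ),
      0 < m ∧ m ≤ M ∧ 0 < c ∧
      Function.Injective v ∧
      (∀ x : ℤ × ℤ, m ≤ ‖v x‖ ∧ ‖v x‖ ≤ M) ∧
      ∀ x y : ℤ × ℤ, x ≠ y → ∀ t : ℝ,
        ‖(latticeEmb x + t • v x) - (latticeEmb y + t • v y)‖ ≥ c := by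
  refine ⟨vAux, 8, 13, 1, by norm_num, by norm_num, by norm_num, ?_, ?_, ?_⟩
  · -- injectivity
    intro p q h
    have h0 := congrArg (fun v : EuclideanSpace ℝ (Fin 2) => v 0) h
    have h1 := congrArg (fun v : EuclideanSpace ℝ (Fin 2) => v 1) h
    simp [vAux] at h0 h1
    have e1 : (p.1 : ℝ) = q.1 := by exact_mod_cast h1
    have e0 : (p.2 : ℝ) = q.2 := by exact_mod_cast h0
    have : p.1 = q.1 := by exact_mod_cast e1
    have : p.2 = q.2 := by exact_mod_cast e0
    exact Prod.ext ‹p.1 = q.1› ‹p.2 = q.2›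
  · -- norm bounds
    intro p
    have ha := arctan_abs_lt_two p.1
    have hb := arctan_abs_lt_two p.2
    rw [abs_lt] at ha hb
    have hnorm : ‖vAux p‖ = Real.sqrt ((10 - Real.arctan p.2)^2 + (Real.arctan p.1)^2) := by
      rw [EuclideanSpace.norm_eq]
      congr 1
      rw [Fin.sum_univ_two]
      simp [vAux, Real.norm_eq_abs, sq_abs]
    rw [hnorm]
    constructor
    · rw [show (8:ℝ) = Real.sqrt 64 by
        rw [show (64:ℝ) = 8^2 by norm_num, Real.sqrt_sq (by norm_num)]]
      apply Real.sqrt_le_sqrt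
      nlinarith
    · rw [show (13:ℝ) = Real.sqrt 169 by
        rw [show (169:ℝ) = 13^2 by norm_num, Real.sqrt_sq (by norm_num)]]
      apply Real.sqrt_le_sqrt
      nlinarith
  · -- non-collision
    intro x y hxy t
    set d1 : ℝ := (x.1 : ℝ) - y.1 with hd1
    set d2 : ℝ := (x.2 : ℝ) - y.2 with hd2
    set e1 : ℝ := Real.arctan x.1 - Real.arctan y.1 with he1
    set e2 : ℝ := Real.arctan x.2 - Real.arctan y.2 with he2
    have k1 : d1 * e1 ≥ |e1| := arctan_key x.1 y.1
    have k2 : d2 * e2 ≥ |e2| := arctan_key x.2 y.2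
    have hN : e1^2 + e2^2 > 0 := by
      have : x.1 ≠ y.1 ∨ x.2 ≠ y.2 := by
        by_contra hc
        push_neg at hc
        exact hxy (Prod.ext hc.1 hc.2)
      rcases this with h | h
      · have : e1 ≠ 0 := by
          simp only [he1, sub_ne_zero]
          exact fun hc => h (by exact_mod_cast Real.arctan_injective hc)
        positivity
      · have : e2 ≠ 0 := by
          simp only [he2, sub_ne_zero]
          exact fun hc => h (by exact_mod_cast Real.arctan_injective hc)
        positivity
    have hu : ‖(latticeEmb x + t • vAux x) - (latticeEmb y + t • vAux y)‖
        = Real.sqrt ((d1 - t * e2)^2 + (d2 + t * e1)^2) := by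
      rw [EuclideanSpace.norm_eq]
      congr 1
      rw [Fin.sum_univ_two]
      have c0 : ((latticeEmb x + t • vAux x) - (latticeEmb y + t • vAux y)) 0
          = d1 - t * e2 := by
        simp [latticeEmb, vAux, hd1, he2]; ring
      have c1 : ((latticeEmb x + t • vAux x) - (latticeEmb y + t • vAux y)) 1
          = d2 + t * e1 := by
        simp [latticeEmb, vAux, hd2, he1]; ring
      rw [c0, c1]
      simp [Real.norm_eq_abs, sq_abs]
    rw [hu, ge_iff_le, show (1:ℝ) = Real.sqrt 1 by simp]
    apply Real.sqrt_le_sqrt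
    -- main algebraic inequality
    have habs1 : |e1|^2 = e1^2 := sq_abs e1
    have habs2 : |e2|^2 = e2^2 := sq_abs e2
    have hpos1 : |e1| ≥ 0 := abs_nonneg e1
    have hpos2 : |e2| ≥ 0 := abs_nonneg e2
    have hdot : (d1 - t*e2)*e1 + (d2 + t*e1)*e2 ≥ |e1| + |e2| := by
      have : (d1 - t*e2)*e1 + (d2 + t*e1)*e2 = d1*e1 + d2*e2 := by ring
      linarith
    have hCS : ((d1 - t*e2)*e1 + (d2 + t*e1)*e2)^2
        ≤ ((d1 - t*e2)^2 + (d2 + t*e1)^2) * (e1^2 + e2^2) := by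
      have hid : ((d1 - t*e2)^2 + (d2 + t*e1)^2) * (e1^2 + e2^2)
          - ((d1 - t*e2)*e1 + (d2 + t*e1)*e2)^2 = ((d1 - t*e2)*e2 - (d2 + t*e1)*e1)^2 := by ring
      linarith [sq_nonneg ((d1 - t*e2)*e2 - (d2 + t*e1)*e1)]
    have hsq : e1^2 + e2^2 ≤ ((d1 - t*e2)*e1 + (d2 + t*e1)*e2)^2 := by
      have hA : (|e1| + |e2|)^2 ≤ ((d1 - t*e2)*e1 + (d2 + t*e1)*e2)^2 :=
        pow_le_pow_left₀ (add_nonneg hpos1 hpos2) hdot 2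
      have hB : e1^2 + e2^2 ≤ (|e1| + |e2|)^2 := by
        rw [add_sq, habs1, habs2]; linarith [mul_nonneg hpos1 hpos2]
      linarith
    exact le_of_mul_le_mul_right (by rw [one_mul]; linarith) hN
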